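/- If a relation R ⊆ {0,1}^n is Horn (closed under coordinate-wise ∧), then R is safely OR-free: neither R nor any relation obtained from R by identification of variables yields OR = {01,10,11} by substitution of constants. -/
import Mathlib


/-- The binary OR relation {01, 10, 11}. -/
def OrRel : Set (Fin 2 → Bool) := {x | (x 0 || x 1) = true}

/-- The relation obtained from `R` by identification of variables along `σ`. -/
def Ident {n m : ℕ} (σ : Fin n → Fin m) (R : Set (Fin n → Bool)) : Set (Fin m → Bool) :=
  {x | (fun i => x (σ i)) ∈ R}

/-- Substitution of constants turning an `m`-ary relation into a binary relation:
each position gets one of the two variables or a constant. -/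
def Subst2 {m : ℕ} (ξ : Fin m → (Fin 2 ⊕ Bool)) (R : Set (Fin m → Bool)) :
    Set (Fin 2 → Bool) :=
  {x | (fun i => Sum.elim x id (ξ i)) ∈ R}

/-- Each variable is used at most once among the positions. -/
def InjOnVars {m : ℕ} (ξ : Fin m → (Fin 2 ⊕ Bool)) : Prop :=
  ∀ i i' j, ξ i = Sum.inl j → ξ i' = Sum.inl j → i = i'

lemma horn_not_or {m : ℕ} (R : Set (Fin m → Bool))
    (hHorn : ∀ a ∈ R, ∀ b ∈ R, (fun i => a i && b i) ∈ R)
    (ξ : Fin m → (Fin 2 ⊕ Bool)) : Subst2 ξ R ≠ OrRel := by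
  intro h
  have ha : (![false, true]) ∈ Subst2 ξ R := by rw [h]; simp [OrRel]
  have hb : (![true, false]) ∈ Subst2 ξ R := by rw [h]; simp [OrRel]
  have hc := hHorn _ ha _ hb
  have hz : (![false, false]) ∈ Subst2 ξ R := by
    show (fun i => Sum.elim ![false, false] id (ξ i)) ∈ R
    convert hc using 2 with i
    cases hξ : ξ i with
    | inl j => fin_cases j <;> simp
    | inr c => simp
  rw [h] at hz
  simp [OrRel] at hz

theorem horn_implies_safely_or_free (n : ℕ) (R : Set (Fin n → Bool))
    (hHorn : ∀ a ∈ R, ∀ b ∈ R, (fun i => a i && b i) ∈ R) :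
    -- R itself is OR-free
    (∀ ξ : Fin n → (Fin 2 ⊕ Bool), InjOnVars ξ → Subst2 ξ R ≠ OrRel) ∧
    -- and so is every relation obtained from R by identification of variables
    (∀ m : ℕ, ∀ σ : Fin n → Fin m, ∀ ξ : Fin m → (Fin 2 ⊕ Bool),
      InjOnVars ξ → Subst2 ξ (Ident σ R) ≠ OrRel) := by
  constructor
  · intro ξ _; exact horn_not_or R hHorn ξ
  · intro m σ ξ _
    exact horn_not_or (Ident σ R) (fun a ha b hb => hHorn _ ha _ hb) ξ
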